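/- arXiv:2009.13617 — 2 statements merged into one kernel-verified Lean document; each statement's English description precedes it below -/
import Mathlib

section
/- For every real x ≥ 1 and every real s ≥ 1, s(x^s + x - x^{s-1} - 1) - x^s + 1 ≥ 0. -/
open Real

theorem stmt_1 (x s : ℝ) (hx : 1 ≤ x) (hs : 1 ≤ s) :
    0 ≤ s * (x ^ s + x - x ^ (s - 1) - 1) - x ^ s + 1 := by
  have hs0 : 0 < s := lt_of_lt_of_le one_pos hs
  have hx0 : (0:ℝ) ≤ x := le_trans zero_le_one hx
  have key : x ^ ((1:ℝ)/s) * (x ^ s) ^ ((s-1)/s) ≤ (1/s) * x + ((s-1)/s) * x ^ s := by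
    apply Real.geom_mean_le_arith_mean2_weighted
    · positivity
    · apply div_nonneg (by linarith) hs0.le
    · exact hx0
    · positivity
    · field_simp; ring
  have h1 : (x ^ s) ^ ((s-1)/s) = x ^ (s-1) := by
    rw [← Real.rpow_mul hx0]
    congr 1
    field_simp
  have h2 : x ^ ((1:ℝ)/s) * x ^ (s-1) ≤ (1/s) * x + ((s-1)/s) * x ^ s := by
    rw [← h1]; exact key
  -- x^{1/s} ≥ 1 since x ≥ 1
  have h3 : (1:ℝ) ≤ x ^ ((1:ℝ)/s) := Real.one_le_rpow hx (by positivity)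
  have h4 : (0:ℝ) ≤ x ^ (s-1) := Real.rpow_nonneg hx0 _
  have h5 : x ^ (s-1) ≤ (1/s) * x + ((s-1)/s) * x ^ s := by
    nlinarith
  have h6 : s * x ^ (s-1) ≤ x + (s-1) * x ^ s := by
    have := mul_le_mul_of_nonneg_left h5 hs0.le
    calc s * x ^ (s-1) ≤ s * ((1/s) * x + ((s-1)/s) * x ^ s) := this
      _ = x + (s-1) * x ^ s := by field_simp
  nlinarith [Real.one_le_rpow hx hs0.le]
end

section
/- Let n ≥ 4 be an integer and 0 < r < R. For each τ > 0 let w(t,τ) > 0 be the unique solution of w(n-1+w²)^{(n-3)/2} = τ/t, and define ψ(τ) = (n-2)(w(r,τ) - w(R,τ)) + (n-3)√(n-1)·(arctan(w(R,τ)/√(n-1)) - arctan(w(r,τ)/√(n-1))). Then ∂ψ/∂τ = (w(r,τ) - w(R,τ))/τ > 0, so ψ is strictly increasing in τ. -/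
open Real Set Filter

noncomputable def Fn (n : ℕ) (w : ℝ) : ℝ := w * ((n : ℝ) - 1 + w ^ 2) ^ (((n : ℝ) - 3) / 2)

lemma Fn_base_pos (n : ℕ) (hn : 4 ≤ n) (w : ℝ) : 0 < (n : ℝ) - 1 + w ^ 2 := by
  have : (4 : ℝ) ≤ n := by exact_mod_cast hn
  nlinarith [sq_nonneg w]

lemma Fn_hasDerivAt (n : ℕ) (hn : 4 ≤ n) (w : ℝ) :
    HasDerivAt (Fn n)
      (((n : ℝ) - 1 + w ^ 2) ^ ((((n : ℝ) - 3) / 2) - 1) *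
        (((n : ℝ) - 1) + ((n : ℝ) - 2) * w ^ 2)) w := by
  have hb := Fn_base_pos n hn w
  have h4 : (4 : ℝ) ≤ n := by exact_mod_cast hn
  have hin : HasDerivAt (fun x : ℝ => (n : ℝ) - 1 + x ^ 2) (2 * w) w := by
    simpa using (hasDerivAt_pow 2 w).const_add ((n : ℝ) - 1)
  have hr : HasDerivAt (fun y : ℝ => y ^ (((n : ℝ) - 3) / 2))
      ((((n : ℝ) - 3) / 2) * ((n : ℝ) - 1 + w ^ 2) ^ ((((n : ℝ) - 3) / 2) - 1))
      ((n : ℝ) - 1 + w ^ 2) :=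
    Real.hasDerivAt_rpow_const (Or.inl hb.ne')
  have hcomp := hr.comp w hin
  have hF : HasDerivAt (Fn n)
      (1 * (((n : ℝ) - 1 + w ^ 2) ^ (((n : ℝ) - 3) / 2)) +
        w * ((((n : ℝ) - 3) / 2) * ((n : ℝ) - 1 + w ^ 2) ^ ((((n : ℝ) - 3) / 2) - 1) * (2 * w))) w :=
    (hasDerivAt_id w).mul hcomp
  have hsplit : ((n : ℝ) - 1 + w ^ 2) ^ (((n : ℝ) - 3) / 2)
      = ((n : ℝ) - 1 + w ^ 2) ^ ((((n : ℝ) - 3) / 2) - 1) * ((n : ℝ) - 1 + w ^ 2) := by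
    rw [← Real.rpow_add_one hb.ne']
    ring_nf
  have key : 1 * (((n : ℝ) - 1 + w ^ 2) ^ (((n : ℝ) - 3) / 2)) +
        w * ((((n : ℝ) - 3) / 2) * ((n : ℝ) - 1 + w ^ 2) ^ ((((n : ℝ) - 3) / 2) - 1) * (2 * w))
      = ((n : ℝ) - 1 + w ^ 2) ^ ((((n : ℝ) - 3) / 2) - 1) *
        (((n : ℝ) - 1) + ((n : ℝ) - 2) * w ^ 2) := by
    rw [hsplit]; ring
  rw [key] at hF
  exact hF

lemma Fn_deriv_pos (n : ℕ) (hn : 4 ≤ n) (w : ℝ) :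
    0 < ((n : ℝ) - 1 + w ^ 2) ^ ((((n : ℝ) - 3) / 2) - 1) *
        (((n : ℝ) - 1) + ((n : ℝ) - 2) * w ^ 2) := by
  have h4 : (4 : ℝ) ≤ n := by exact_mod_cast hn
  have h1 := Real.rpow_pos_of_pos (Fn_base_pos n hn w) ((((n : ℝ) - 3) / 2) - 1)
  have h2 : 0 < ((n : ℝ) - 1) + ((n : ℝ) - 2) * w ^ 2 := by nlinarith [sq_nonneg w]
  positivity

lemma Fn_strictMono (n : ℕ) (hn : 4 ≤ n) : StrictMono (Fn n) := by
  apply strictMono_of_deriv_pos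
  intro x
  rw [(Fn_hasDerivAt n hn x).deriv]
  exact Fn_deriv_pos n hn x

lemma Fn_surjective (n : ℕ) (hn : 4 ≤ n) : Function.Surjective (Fn n) := by
  have h4 : (4 : ℝ) ≤ n := by exact_mod_cast hn
  have hcont : Continuous (Fn n) := by
    have : Differentiable ℝ (Fn n) := fun x => (Fn_hasDerivAt n hn x).differentiableAt
    exact this.continuous
  have hone : ∀ w : ℝ, 1 ≤ |w| → 1 ≤ ((n : ℝ) - 1 + w ^ 2) ^ (((n : ℝ) - 3) / 2) := by
    intro w hw
    apply Real.one_le_rpow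
    · nlinarith [sq_abs w, sq_nonneg w]
    · nlinarith
  have htop : Tendsto (Fn n) atTop atTop := by
    apply tendsto_atTop_mono' _ _ tendsto_id
    filter_upwards [eventually_ge_atTop (1 : ℝ)] with w hw
    have h1 := hone w (by rwa [abs_of_pos (by linarith)])
    have : w * 1 ≤ Fn n w := by
      apply mul_le_mul_of_nonneg_left h1 (by linarith)
    simpa using this
  have hbot : Tendsto (Fn n) atBot atBot := by
    apply tendsto_atBot_mono' _ _ tendsto_id
    filter_upwards [eventually_le_atBot (-1 : ℝ)] with w hw
    have h1 := hone w (by rw [abs_of_neg (by linarith)]; linarith)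
    have : Fn n w ≤ w * 1 := by
      apply mul_le_mul_of_nonpos_left h1 (by linarith)
    simpa using this
  exact hcont.surjective htop hbot

theorem stmt_18 (n : ℕ) (hn : 4 ≤ n) (r R : ℝ) (hr : 0 < r) (hrR : r < R)
    (W : ℝ → ℝ → ℝ)
    (hW : ∀ t ∈ Ioi (0 : ℝ), ∀ τ ∈ Ioi (0 : ℝ), 0 < W t τ ∧
        W t τ * ((n : ℝ) - 1 + W t τ ^ 2) ^ (((n : ℝ) - 3) / 2) = τ / t) :
    (∀ τ ∈ Ioi (0 : ℝ),
      HasDerivAt (fun τ : ℝ =>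
          ((n : ℝ) - 2) * (W r τ - W R τ) +
            ((n : ℝ) - 3) * Real.sqrt ((n : ℝ) - 1) *
              (Real.arctan (W R τ / Real.sqrt ((n : ℝ) - 1)) -
                Real.arctan (W r τ / Real.sqrt ((n : ℝ) - 1))))
        ((W r τ - W R τ) / τ) τ ∧
      0 < (W r τ - W R τ) / τ) ∧
    StrictMonoOn (fun τ : ℝ =>
        ((n : ℝ) - 2) * (W r τ - W R τ) +
          ((n : ℝ) - 3) * Real.sqrt ((n : ℝ) - 1) *
            (Real.arctan (W R τ / Real.sqrt ((n : ℝ) - 1)) -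
              Real.arctan (W r τ / Real.sqrt ((n : ℝ) - 1))))
      (Ioi 0) := by
  have h4 : (4 : ℝ) ≤ n := by exact_mod_cast hn
  have hR : 0 < R := hr.trans hrR
  have ha : (0 : ℝ) < Real.sqrt ((n : ℝ) - 1) := Real.sqrt_pos.2 (by linarith)
  have ha2 : Real.sqrt ((n : ℝ) - 1) ^ 2 = (n : ℝ) - 1 := Real.sq_sqrt (by linarith)
  set a := Real.sqrt ((n : ℝ) - 1) with ha_def
  have hmono := Fn_strictMono n hn
  have hsurj := Fn_surjective n hn
  set g : ℝ → ℝ := fun y => (StrictMono.orderIsoOfSurjective (Fn n) hmono hsurj).symm y with hg_def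
  have hginv : ∀ y, Fn n (g y) = y := by
    intro y
    have := (StrictMono.orderIsoOfSurjective (Fn n) hmono hsurj).apply_symm_apply y
    rwa [StrictMono.coe_orderIsoOfSurjective] at this
  have hgcont : Continuous g :=
    (OrderIso.continuous (StrictMono.orderIsoOfSurjective (Fn n) hmono hsurj).symm)
  have hWeq : ∀ t, 0 < t → ∀ τ, 0 < τ → W t τ = g (τ / t) := by
    intro t ht τ hτ
    have h := (hW t ht τ hτ).2
    have h2 : Fn n (W t τ) = Fn n (g (τ / t)) := by
      rw [hginv]; exact h
    exact hmono.injective h2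
  -- per-t derivative lemma
  have hkey : ∀ t, 0 < t → ∀ τ, 0 < τ →
      HasDerivAt (fun σ : ℝ => ((n : ℝ) - 2) * W t σ - ((n : ℝ) - 3) * a * Real.arctan (W t σ / a))
        (W t τ / τ) τ := by
    intro t ht τ hτ
    obtain ⟨hwpos, hweq⟩ := hW t ht τ hτ
    set w := W t τ with hw_def
    have hb := Fn_base_pos n hn w
    set B := (n : ℝ) - 1 + w ^ 2 with hB_def
    set C := ((n : ℝ) - 1) + ((n : ℝ) - 2) * w ^ 2 with hC_def
    have hC : 0 < C := by have := sq_nonneg w; nlinarith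
    have hfd := Fn_hasDerivAt n hn w
    have hfd' := Fn_deriv_pos n hn w
    have hgw : g (τ / t) = w := (hWeq t ht τ hτ).symm
    have hgder : HasDerivAt g ((B ^ ((((n : ℝ) - 3) / 2) - 1) * C)⁻¹) (τ / t) := by
      refine HasDerivAt.of_local_left_inverse hgcont.continuousAt ?_ hfd'.ne'
        (Filter.Eventually.of_forall hginv)
      rw [hgw]; exact hfd
    have hdivt : HasDerivAt (fun σ : ℝ => σ / t) (1 / t) τ := by
      simpa using (hasDerivAt_id τ).div_const t
    have hWd : HasDerivAt (fun σ : ℝ => W t σ) ((B ^ ((((n : ℝ) - 3) / 2) - 1) * C)⁻¹ * (1 / t)) τ := by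
      have hcomp := hgder.comp τ hdivt
      refine hcomp.congr_of_eventuallyEq ?_
      filter_upwards [Ioi_mem_nhds hτ] with σ hσ
      exact hWeq t ht σ hσ
    set W' := (B ^ ((((n : ℝ) - 3) / 2) - 1) * C)⁻¹ * (1 / t) with hW'_def
    have harc : HasDerivAt (fun σ : ℝ => Real.arctan (W t σ / a))
        (1 / (1 + (w / a) ^ 2) * (W' / a)) τ :=
      (hWd.div_const a).arctan
    have hsum : HasDerivAt
        (fun σ : ℝ => ((n : ℝ) - 2) * W t σ - ((n : ℝ) - 3) * a * Real.arctan (W t σ / a))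
        (((n : ℝ) - 2) * W' - ((n : ℝ) - 3) * a * (1 / (1 + (w / a) ^ 2) * (W' / a))) τ :=
      (hWd.const_mul _).sub (harc.const_mul _)
    convert hsum using 1
    -- algebra: show w / τ equals the derivative expression
    have hBk : B ^ (((n : ℝ) - 3) / 2) = τ / (t * w) := by
      rw [eq_div_iff (by positivity)]
      have : w * B ^ (((n : ℝ) - 3) / 2) = τ / t := hweq
      field_simp at this ⊢
      linarith [this]
    have hBk1 : B ^ ((((n : ℝ) - 3) / 2) - 1) = τ / (t * w * B) := by
      rw [show (((n : ℝ) - 3) / 2 - 1) = ((n : ℝ) - 3) / 2 + (-1) by ring,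
        Real.rpow_add hb, Real.rpow_neg_one, hBk]
      field_simp
    have hwa : (w / a) ^ 2 = w ^ 2 / ((n : ℝ) - 1) := by
      rw [div_pow, ha2]
    rw [hW'_def, hBk1, hwa]
    have hn1 : ((n : ℝ) - 1) ≠ 0 := by linarith
    have h1w : (1 : ℝ) + w ^ 2 / ((n : ℝ) - 1) ≠ 0 := by
      have hn1' : (0:ℝ) < (n : ℝ) - 1 := by linarith
      have : (0:ℝ) < 1 + w ^ 2 / ((n : ℝ) - 1) := by positivity
      exact this.ne'
    field_simp
    rw [hC_def, hB_def]
    have hBne : (n : ℝ) - 1 + w ^ 2 ≠ 0 := (Fn_base_pos n hn w).ne'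
    field_simp
    ring
  -- main part 1
  have h1 : ∀ τ ∈ Ioi (0 : ℝ),
      HasDerivAt (fun τ : ℝ =>
          ((n : ℝ) - 2) * (W r τ - W R τ) +
            ((n : ℝ) - 3) * a * (Real.arctan (W R τ / a) - Real.arctan (W r τ / a)))
        ((W r τ - W R τ) / τ) τ ∧ 0 < (W r τ - W R τ) / τ := by
    intro τ hτ
    have hτ' : 0 < τ := hτ
    have hlt : W R τ < W r τ := by
      have hFr : Fn n (W r τ) = τ / r := (hW r hr τ hτ').2
      have hFR : Fn n (W R τ) = τ / R := (hW R hR τ hτ').2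
      have : Fn n (W R τ) < Fn n (W r τ) := by
        rw [hFr, hFR]; exact div_lt_div_of_pos_left hτ' hr hrR
      exact hmono.lt_iff_lt.mp this
    constructor
    · have hψ := (hkey r hr τ hτ').sub (hkey R hR τ hτ')
      have hval : (W r τ - W R τ) / τ = W r τ / τ - W R τ / τ := sub_div _ _ _
      rw [hval]
      exact hψ.congr_of_eventuallyEq (Filter.Eventually.of_forall fun σ => by simp only [Pi.sub_apply]; ring)
    · exact div_pos (sub_pos.2 hlt) hτ'
  refine ⟨h1, ?_⟩
  apply strictMonoOn_of_deriv_pos (convex_Ioi 0)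
  · intro x hx
    exact ((h1 x hx).1).continuousAt.continuousWithinAt
  · intro x hx
    rw [interior_Ioi] at hx
    rw [((h1 x hx).1).deriv]
    exact (h1 x hx).2
end
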